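/- Let G be a pro-2-group generated by involutions. Then the map H^1(G, Z/2Z) → H^1(G, Q_2/Z_2) induced by the inclusion Z/2Z ⊂ Q_2/Z_2 is an isomorphism. -/

import Mathlib

/-! Statement 3: for a pro-2-group G generated by involutions, the map
H¹(G,ℤ/2ℤ) → H¹(G,ℚ₂/ℤ₂) induced by the inclusion ℤ/2ℤ ⊂ ℚ₂/ℤ₂ is an isomorphism. -/

namespace GCoh

variable {G : Type*} [Group G] [TopologicalSpace G]
variable {A : Type*} [AddCommGroup A] [TopologicalSpace A]

/-- Inhomogeneous differential for continuous cochains, trivial action. -/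
def d (n : ℕ) (f : (Fin n → G) → A) : (Fin (n+1) → G) → A :=
  fun g =>
    f (fun i => g i.succ)
      + ∑ i : Fin n, ((-1 : ℤ) ^ ((i : ℕ) + 1)) •
          f (fun j => if (j : ℕ) < (i : ℕ) then g j.castSucc
                      else if (j : ℕ) = (i : ℕ) then g i.castSucc * g i.succ
                      else g j.succ)
      + ((-1 : ℤ) ^ (n + 1)) • f (fun i => g i.castSucc)

/-- A continuous `n`-cocycle (trivial action). -/
def IsCocycle (n : ℕ) (f : (Fin n → G) → A) : Prop :=
  Continuous f ∧ d n f = 0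

/-- A continuous `n`-coboundary (trivial action). -/
def IsCoboundary : (n : ℕ) → ((Fin n → G) → A) → Prop
  | 0, f => f = 0
  | (n+1), f => ∃ h : (Fin n → G) → A, Continuous h ∧ d n h = f

/-- Pullback of cochains along a homomorphism. -/
def pull {G' : Type*} [Group G'] (φ : G' →* G) (n : ℕ) (f : (Fin n → G) → A) :
    (Fin n → G') → A :=
  fun v => f (fun i => φ (v i))

/-- A pro-`p` group: a profinite group all of whose finite quotients are `p`-groups. -/
def IsProP (p : ℕ) (G : Type*) [Group G] [TopologicalSpace G] : Prop :=
  CompactSpace G ∧ T2Space G ∧ TotallyDisconnectedSpace G ∧ IsTopologicalGroup G ∧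
    ∀ U : Subgroup G, U.Normal → IsOpen (U : Set G) → ∃ n : ℕ, Nat.card (G ⧸ U) = p ^ n

/-- `G` is topologically generated by its involutions. -/
def GeneratedByInvolutions (G : Type*) [Group G] [TopologicalSpace G] : Prop :=
  closure ((Subgroup.closure {g : G | g ^ 2 = 1} : Subgroup G) : Set G) = Set.univ

end GCoh

open GCoh

/-- The discrete module `ℚ₂/ℤ₂`. -/
noncomputable abbrev Q2Z2 := ℚ_[2] ⧸ (PadicInt.Coe.ringHom (p := 2)).toAddMonoidHom.range

/-- The class of `1/2`, a generator of the `2`-torsion of `ℚ₂/ℤ₂`. -/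
noncomputable def halfClass : Q2Z2 := QuotientAddGroup.mk ((2 : ℚ_[2])⁻¹)

/-- The inclusion `ℤ/2ℤ ↪ ℚ₂/ℤ₂` onto the 2-torsion subgroup. -/
noncomputable def iota : ZMod 2 →+ Q2Z2 :=
  ZMod.lift 2 ⟨(zmultiplesHom Q2Z2) halfClass, by
    show (2 : ℤ) • halfClass = 0
    rw [halfClass, ← QuotientAddGroup.mk_zsmul, QuotientAddGroup.eq_zero_iff]
    refine ⟨(1 : ℤ_[2]), ?_⟩
    show ((1 : ℤ_[2]) : ℚ_[2]) = (2 : ℤ) • ((2 : ℚ_[2])⁻¹)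
    rw [zsmul_eq_mul]; push_cast; norm_num⟩

section Aux

namespace GCoh
variable {G : Type*} [Group G] [TopologicalSpace G]
variable {A : Type*} [AddCommGroup A] [TopologicalSpace A]

omit [TopologicalSpace G] [TopologicalSpace A] in
lemma d_zero_eq (h : (Fin 0 → G) → A) : d 0 h = 0 := by
  funext g
  simp [d, Subsingleton.elim (fun i : Fin 0 => g i.succ) (fun i => g i.castSucc)]

lemma coboundary_one_iff (f : (Fin 1 → G) → A) : IsCoboundary 1 f ↔ f = 0 := by
  constructor
  · rintro ⟨h, _, rfl⟩; exact d_zero_eq h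
  · rintro rfl; exact ⟨0, continuous_const, d_zero_eq 0⟩

omit [TopologicalSpace G] [TopologicalSpace A] in
lemma cocycle_add (f : (Fin 1 → G) → A) (hd : d 1 f = 0) (a b : G) :
    f (fun _ => a * b) = f (fun _ => a) + f (fun _ => b) := by
  have h := congrFun hd ![a, b]
  simp [d, Fin.sum_univ_one] at h
  have e2 : (fun i : Fin 1 => (![a,b]) i.castSucc) = (fun _ => a) := by
    funext i; fin_cases i; rfl
  rw [e2] at h
  rw [eq_comm, ← sub_eq_zero, ← h]; abel

omit [Group G] [AddCommGroup A] [TopologicalSpace G] [TopologicalSpace A] in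
lemma eval_eq (f : (Fin 1 → G) → A) (v : Fin 1 → G) : f v = f (fun _ => v 0) := by
  congr 1; funext i; fin_cases i; rfl


omit [TopologicalSpace G] [TopologicalSpace A] in
lemma d_one_eq_zero (f : (Fin 1 → G) → A)
    (h : ∀ a b : G, f (fun _ => a * b) = f (fun _ => a) + f (fun _ => b)) :
    d 1 f = 0 := by
  funext g
  have hg : g = ![g 0, g 1] := by funext i; fin_cases i <;> rfl
  rw [hg]
  simp only [d, Fin.sum_univ_one, Pi.zero_apply]
  have e1 : (fun i : Fin 1 => (![g 0, g 1]) i.succ) = (fun _ => g 1) := by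
    funext i; fin_cases i; rfl
  have e2 : (fun i : Fin 1 => (![g 0, g 1]) i.castSucc) = (fun _ => g 0) := by
    funext i; fin_cases i; rfl
  have e3 : (fun j : Fin 1 => if (j : ℕ) < ((0 : Fin 1) : ℕ) then (![g 0, g 1]) j.castSucc
      else if (j : ℕ) = ((0 : Fin 1) : ℕ) then (![g 0, g 1]) (0 : Fin 1).castSucc * (![g 0, g 1]) (0 : Fin 1).succ
      else (![g 0, g 1]) j.succ) = (fun _ => g 0 * g 1) := by
    funext j; fin_cases j; rfl
  rw [e1, e2, e3, h (g 0) (g 1)]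
  simp

end GCoh

lemma halfClass_ne_zero : halfClass ≠ 0 := by
  rw [halfClass, Ne, QuotientAddGroup.eq_zero_iff]
  rintro ⟨z, hz⟩
  have hz' : ((z : ℚ_[2])) = (2 : ℚ_[2])⁻¹ := hz
  have h1 : ‖(z : ℚ_[2])‖ ≤ 1 := z.norm_le_one
  rw [hz', norm_inv] at h1
  have h2 : ‖(2 : ℚ_[2])‖ = 2⁻¹ := by
    have := @Padic.norm_p 2 ⟨Nat.prime_two⟩
    push_cast at this ⊢
    simpa using this
  rw [h2] at h1
  norm_num at h1

lemma iota_one : iota 1 = halfClass := by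
  have h : (1 : ZMod 2) = ((1 : ℤ) : ZMod 2) := by decide
  rw [iota, h, ZMod.lift_coe]
  show (1 : ℤ) • halfClass = halfClass
  simp

lemma iota_eq_zero_iff (x : ZMod 2) : iota x = 0 ↔ x = 0 := by
  constructor
  · intro h
    fin_cases x
    · rfl
    · change iota 1 = 0 at h
      rw [iota_one] at h
      exact absurd h halfClass_ne_zero
  · rintro rfl; exact map_zero iota

lemma two_torsion (x : Q2Z2) (hx : x + x = 0) : x = 0 ∨ x = halfClass := by
  obtain ⟨y, rfl⟩ := QuotientAddGroup.mk_surjective x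
  rw [← QuotientAddGroup.mk_add, QuotientAddGroup.eq_zero_iff] at hx
  obtain ⟨z, hz⟩ := hx
  have hz' : ((z : ℚ_[2])) = y + y := hz
  have hspec := z.appr_spec 1
  rw [Ideal.mem_span_singleton, pow_one] at hspec
  obtain ⟨w, hw⟩ := hspec
  push_cast at hw
  set k := z.appr 1 with hk
  rcases Nat.even_or_odd k with ⟨m, hm⟩ | ⟨m, hm⟩
  · left
    rw [QuotientAddGroup.eq_zero_iff]
    refine ⟨(m : ℤ_[2]) + w, ?_⟩
    have hzz : z = 2 * ((m : ℤ_[2]) + w) := by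
      have hk2 : ((k : ℤ_[2])) = 2 * (m : ℤ_[2]) := by rw [hm]; push_cast; ring
      linear_combination hw + hk2
    have hQ := congrArg (fun t : ℤ_[2] => (t : ℚ_[2])) hzz
    have h22 : ((2 : ℤ_[2]) : ℚ_[2]) = 2 := by norm_cast
    push_cast [h22] at hQ
    show (((m : ℤ_[2]) + w : ℤ_[2]) : ℚ_[2]) = y
    apply mul_left_cancel₀ (two_ne_zero : (2 : ℚ_[2]) ≠ 0)
    push_cast
    linear_combination hz' - hQ
  · right
    rw [halfClass, QuotientAddGroup.eq]
    refine ⟨-((m : ℤ_[2]) + w), ?_⟩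
    have hzz : z = 2 * ((m : ℤ_[2]) + w) + 1 := by
      have hk2 : ((k : ℤ_[2])) = 2 * (m : ℤ_[2]) + 1 := by rw [hm]; push_cast; ring
      linear_combination hw + hk2
    have hQ := congrArg (fun t : ℤ_[2] => (t : ℚ_[2])) hzz
    have h22 : ((2 : ℤ_[2]) : ℚ_[2]) = 2 := by norm_cast
    push_cast [h22] at hQ
    show ((-((m : ℤ_[2]) + w) : ℤ_[2]) : ℚ_[2]) = -y + (2 : ℚ_[2])⁻¹
    apply mul_left_cancel₀ (two_ne_zero : (2 : ℚ_[2]) ≠ 0)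
    have hinv : (2 : ℚ_[2]) * (2 : ℚ_[2])⁻¹ = 1 :=
      mul_inv_cancel₀ (two_ne_zero : (2 : ℚ_[2]) ≠ 0)
    push_cast
    linear_combination hQ - hz' + hinv

lemma range_isOpen :
    IsOpen (((PadicInt.Coe.ringHom (p := 2)).toAddMonoidHom.range : AddSubgroup ℚ_[2]) :
      Set ℚ_[2]) := by
  have heq : (((PadicInt.Coe.ringHom (p := 2)).toAddMonoidHom.range : AddSubgroup ℚ_[2]) :
      Set ℚ_[2]) = {x : ℚ_[2] | ‖x‖ < 2} := by
    ext x
    constructor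
    · rintro ⟨z, rfl⟩
      have h1 : ‖((z : ℚ_[2]))‖ ≤ 1 := z.norm_le_one
      exact lt_of_le_of_lt h1 one_lt_two
    · intro h
      have h1 : ‖x‖ ≤ 1 := by
        have := (Padic.norm_le_pow_iff_norm_lt_pow_add_one x 0).2
        simp only [zero_add, zpow_zero, zpow_one] at this
        apply this
        push_cast
        exact_mod_cast h
      exact ⟨⟨x, h1⟩, rfl⟩
  rw [heq]
  exact isOpen_lt continuous_norm continuous_const

noncomputable instance : DiscreteTopology Q2Z2 :=
  QuotientAddGroup.discreteTopology range_isOpen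

end Aux

lemma halfClass_add_halfClass : halfClass + halfClass = 0 := by
  rw [← iota_one, ← map_add]
  have h : (1 + 1 : ZMod 2) = 0 := by decide
  rw [h, map_zero]

theorem h1_two_torsion_iso_of_involutions
    (G : Type) [Group G] [TopologicalSpace G]
    (hG : IsProP 2 G) (hGinv : GeneratedByInvolutions G) :
    -- injectivity of H¹(G,ℤ/2ℤ) → H¹(G,ℚ₂/ℤ₂)
    (∀ f : (Fin 1 → G) → ZMod 2, IsCocycle 1 f →
        IsCoboundary 1 (fun v => iota (f v)) → IsCoboundary 1 f) ∧
    -- surjectivity of H¹(G,ℤ/2ℤ) → H¹(G,ℚ₂/ℤ₂)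
    (∀ f' : (Fin 1 → G) → Q2Z2, IsCocycle 1 f' →
        ∃ f : (Fin 1 → G) → ZMod 2, IsCocycle 1 f ∧
          IsCoboundary 1 (f' - fun v => iota (f v))) := by
  classical
  constructor
  · intro f _ hcb
    rw [coboundary_one_iff] at hcb ⊢
    funext v
    exact (iota_eq_zero_iff (f v)).1 (congrFun hcb v)
  · intro f' hf'
    obtain ⟨hc, hd⟩ := hf'
    have hadd := cocycle_add f' hd
    have hF1 : f' (fun _ => (1 : G)) = 0 := by
      have h := hadd 1 1
      rw [one_mul] at h
      exact (left_eq_add.1 h)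
    -- all values are 2-torsion
    have hS : ∀ g : G, f' (fun _ => g) + f' (fun _ => g) = 0 := by
      set S' : Subgroup G :=
        { carrier := {g : G | f' (fun _ => g) + f' (fun _ => g) = 0}
          one_mem' := by simp [hF1]
          mul_mem' := by
            intro a b ha hb
            simp only [Set.mem_setOf_eq] at ha hb ⊢
            rw [hadd, add_add_add_comm, ha, hb, add_zero]
          inv_mem' := by
            intro g hg
            simp only [Set.mem_setOf_eq] at hg ⊢
            have h1 : f' (fun _ => g) + f' (fun _ => g⁻¹) = 0 := by
              rw [← hadd, mul_inv_cancel, hF1]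
            have h2 : f' (fun _ => g⁻¹) = -f' (fun _ => g) :=
              eq_neg_of_add_eq_zero_right h1
            rw [h2, ← neg_add, hg, neg_zero] } with hS'
      have hgen : Subgroup.closure {g : G | g ^ 2 = 1} ≤ S' := by
        refine (Subgroup.closure_le _).2 ?_
        intro g hg
        show f' (fun _ => g) + f' (fun _ => g) = 0
        rw [← hadd, ← pow_two, hg, hF1]
      have hFc : Continuous (fun g : G => f' (fun _ : Fin 1 => g)) :=
        hc.comp (continuous_pi fun _ => continuous_id)
      have hScl : IsClosed (S' : Set G) := by
        have hσ : Continuous (fun x : Q2Z2 => x + x) := continuous_of_discreteTopology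
        have : IsClosed ({(0 : Q2Z2)} : Set Q2Z2) := isClosed_discrete _
        exact this.preimage (hσ.comp hFc)
      intro g
      have hmem : g ∈ closure ((Subgroup.closure {g : G | g ^ 2 = 1} : Subgroup G) : Set G) := by
        rw [hGinv]; trivial
      have : g ∈ (S' : Set G) := hScl.closure_subset_iff.2 hgen hmem
      exact this
    have hT : ∀ g : G, f' (fun _ => g) = 0 ∨ f' (fun _ => g) = halfClass :=
      fun g => two_torsion _ (hS g)
    set σ : Q2Z2 → ZMod 2 := fun x => if x = 0 then 0 else 1 with hσdef
    refine ⟨fun v => σ (f' v), ⟨?_, ?_⟩, ?_⟩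
    · exact (continuous_of_discreteTopology : Continuous σ).comp hc
    · apply d_one_eq_zero
      intro a b
      have hv : ∀ c : G, f' (fun _ : Fin 1 => c) = f' (fun _ : Fin 1 => c) := fun _ => rfl
      show σ (f' (fun _ => a * b)) = σ (f' (fun _ => a)) + σ (f' (fun _ => b))
      rw [hadd]
      rcases hT a with h1 | h1 <;> rcases hT b with h2 | h2 <;>
        rw [h1, h2] <;>
        simp [hσdef, halfClass_ne_zero, halfClass_add_halfClass] <;> decide
    · rw [coboundary_one_iff]
      funext v
      show f' v - iota (σ (f' v)) = 0
      rw [sub_eq_zero, eval_eq f' v]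
      rcases hT (v 0) with h | h <;> rw [h]
      · simp [hσdef]
      · have hσh : σ halfClass = 1 := if_neg halfClass_ne_zero
        rw [hσh, iota_one]
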